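/- Let (Ω, F, P) be a probability space, (ℱ_n)_{n∈ℕ} a filtration (an increasing sequence of sub-σ-algebras of F), and X_1, X_2, … a sequence of real-valued random variables adapted to (ℱ_n) (i.e., X_n is ℱ_n-measurable for each n). Assume E[X_{n+1} | ℱ_n] = 0 almost surely for all n, and that Σ_{n=1}^∞ E[X_n²] converges. Then the series Σ_{n=1}^∞ X_n converges almost surely. -/

import Mathlib

open MeasureTheory Filter Topology
open scoped ENNReal NNReal

/-- **Loève's theorem** on almost-sure convergence of series of martingale differences:
if `(Xₙ)` is adapted to a filtration `(ℱₙ)` with `E[X_{n+1} | ℱₙ] = 0` a.s. and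
`Σₙ E[Xₙ²] < ∞`, then the series `Σₙ Xₙ` converges almost surely. -/
theorem loeve_martingale_difference_series
    {Ω : Type*} {mΩ : MeasurableSpace Ω} (μ : Measure Ω) [IsProbabilityMeasure μ]
    (ℱ : Filtration ℕ mΩ)
    (X : ℕ → Ω → ℝ) (hX : Adapted ℱ X)
    (hcond : ∀ n, μ[X (n + 1) | ℱ n] =ᵐ[μ] 0)
    (hvar : ∑' n, ∫⁻ ω, ENNReal.ofReal ((X n ω) ^ 2) ∂μ < ⊤) :
    ∀ᵐ ω ∂μ, ∃ l : ℝ, Tendsto (fun N => ∑ i ∈ Finset.range N, X i ω) atTop (𝓝 l) := by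
  classical
  have hXm : ∀ n, StronglyMeasurable (X n) := fun n => ((hX n).mono (ℱ.le n) le_rfl).stronglyMeasurable
  have hfin : ∀ n, ∫⁻ ω, ENNReal.ofReal ((X n ω) ^ 2) ∂μ < ⊤ := fun n =>
    lt_of_le_of_lt (ENNReal.le_tsum n) hvar
  -- each X n is square integrable
  have hXsq : ∀ n, Integrable (fun ω => (X n ω) ^ 2) μ := by
    intro n
    refine ⟨((hXm n).measurable.pow_const 2).aestronglyMeasurable, ?_⟩
    rw [hasFiniteIntegral_iff_ofReal (Filter.Eventually.of_forall fun ω => sq_nonneg _)]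
    exact hfin n
  have hX2 : ∀ n, MemLp (X n) 2 μ := fun n =>
    (memLp_two_iff_integrable_sq (hXm n).aestronglyMeasurable).2 (hXsq n)
  have hXint : ∀ n, Integrable (X n) μ := fun n =>
    (hX2 n).integrable one_le_two
  -- partial sums
  set S : ℕ → Ω → ℝ := fun n ω => ∑ i ∈ Finset.range (n + 1), X i ω with hSdef
  have hS2 : ∀ n, MemLp (S n) 2 μ := by
    intro n
    have h := memLp_finset_sum' (Finset.range (n + 1)) (fun i _ => hX2 i)
    have heq : (∑ i ∈ Finset.range (n + 1), X i) = S n := by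
      funext ω
      simp [hSdef]
    rwa [heq] at h
  have hSint : ∀ n, Integrable (S n) μ := fun n => (hS2 n).integrable one_le_two
  have hadp : StronglyAdapted ℱ S := by
    intro n
    exact Finset.stronglyMeasurable_fun_sum _ fun i hi =>
      (hX i).stronglyMeasurable.mono (ℱ.mono (Nat.lt_succ_iff.mp (Finset.mem_range.mp hi)))
  have hSsucc : ∀ n, S (n + 1) = S n + X (n + 1) := by
    intro n
    funext ω
    simp [hSdef, Finset.sum_range_succ]
  -- martingale property
  have hmart : Martingale S ℱ μ := by
    refine martingale_nat hadp hSint fun n => ?_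
    have h1 : μ[S (n + 1)|ℱ n] =ᵐ[μ] μ[S n|ℱ n] + μ[X (n + 1)|ℱ n] := by
      rw [hSsucc n]
      exact condExp_add (hSint n) (hXint (n + 1)) (ℱ n)
    have h2 : μ[S n|ℱ n] = S n :=
      condExp_of_stronglyMeasurable (ℱ.le n) (hadp n) (hSint n)
    filter_upwards [h1, hcond n] with ω hω1 hω2
    simp [hω1, h2, hω2]
  -- cross terms vanish
  have hmul : ∀ n, Integrable (S n * X (n + 1)) μ := by
    intro n
    refine Integrable.mono' ((hS2 n).integrable_sq.add (hXsq (n + 1)))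
      (((hadp n).mono (ℱ.le n)).mul (hXm (n + 1))).aestronglyMeasurable
      (Filter.Eventually.of_forall fun ω => ?_)
    have := abs_mul (S n ω) (X (n + 1) ω)
    simp only [Pi.mul_apply, Pi.add_apply, Real.norm_eq_abs]
    nlinarith [abs_nonneg (S n ω), abs_nonneg (X (n + 1) ω), sq_abs (S n ω),
      sq_abs (X (n + 1) ω), sq_nonneg (|S n ω| - |X (n + 1) ω|)]
  have hcross : ∀ n, ∫ ω, S n ω * X (n + 1) ω ∂μ = 0 := by
    intro n
    have h1 : ∫ ω, (S n * X (n + 1)) ω ∂μ = ∫ ω, (μ[S n * X (n + 1)|ℱ n]) ω ∂μ :=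
      (integral_condExp (ℱ.le n)).symm
    have h2 : μ[S n * X (n + 1)|ℱ n] =ᵐ[μ] S n * μ[X (n + 1)|ℱ n] :=
      condExp_mul_of_stronglyMeasurable_left (hadp n) (hmul n) (hXint (n + 1))
    have h3 : (S n * μ[X (n + 1)|ℱ n] : Ω → ℝ) =ᵐ[μ] 0 := by
      filter_upwards [hcond n] with ω hω
      simp [hω]
    calc ∫ ω, S n ω * X (n + 1) ω ∂μ
        = ∫ ω, (μ[S n * X (n + 1)|ℱ n]) ω ∂μ := h1
      _ = ∫ ω, (0 : Ω → ℝ) ω ∂μ := integral_congr_ae (h2.trans h3)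
      _ = 0 := by simp
  -- second moments of partial sums
  have hI : ∀ n, ∫ ω, (S n ω) ^ 2 ∂μ = ∑ i ∈ Finset.range (n + 1), ∫ ω, (X i ω) ^ 2 ∂μ := by
    intro n
    induction n with
    | zero => simp [hSdef]
    | succ n ih =>
      have hexp : ∀ ω, (S (n + 1) ω) ^ 2 =
          (S n ω) ^ 2 + (2 * (S n ω * X (n + 1) ω) + (X (n + 1) ω) ^ 2) := by
        intro ω
        rw [hSsucc n]
        simp only [Pi.add_apply]
        ring
      have hint2 : Integrable (fun ω => 2 * (S n ω * X (n + 1) ω) + (X (n + 1) ω) ^ 2) μ :=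
        ((hmul n).const_mul 2).add (hXsq (n + 1))
      calc ∫ ω, (S (n + 1) ω) ^ 2 ∂μ
          = ∫ ω, ((S n ω) ^ 2 + (2 * (S n ω * X (n + 1) ω) + (X (n + 1) ω) ^ 2)) ∂μ :=
            integral_congr_ae (Filter.Eventually.of_forall hexp)
        _ = ∫ ω, (S n ω) ^ 2 ∂μ + ∫ ω, (2 * (S n ω * X (n + 1) ω) + (X (n + 1) ω) ^ 2) ∂μ :=
            integral_add (hS2 n).integrable_sq hint2
        _ = ∫ ω, (S n ω) ^ 2 ∂μ + (2 * ∫ ω, S n ω * X (n + 1) ω ∂μ + ∫ ω, (X (n + 1) ω) ^ 2 ∂μ) := by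
            have h4 := integral_add ((hmul n).const_mul 2) (hXsq (n + 1))
            simp only [Pi.mul_apply] at h4
            rw [h4, integral_const_mul]
        _ = ∑ i ∈ Finset.range (n + 2), ∫ ω, (X i ω) ^ 2 ∂μ := by
            rw [ih, hcross n, mul_zero, zero_add]
            exact (Finset.sum_range_succ _ (n + 1)).symm
  -- L¹ bound
  set T : ℝ≥0∞ := ∑' n, ∫⁻ ω, ENNReal.ofReal ((X n ω) ^ 2) ∂μ with hTdef
  have hTlt : T < ⊤ := hvar
  have hS2bound : ∀ n, eLpNorm (S n) 2 μ ≤ T ^ (1/2 : ℝ) := by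
    intro n
    have heq : eLpNorm (S n) 2 μ = (∫⁻ ω, ENNReal.ofReal ((S n ω) ^ 2) ∂μ) ^ (1/2 : ℝ) := by
      have hpt : ∀ x : ℝ, ‖x‖ₑ ^ (2:ℝ) = ENNReal.ofReal (x ^ 2) := by
        intro x
        rw [← ofReal_norm,
          ENNReal.ofReal_rpow_of_nonneg (norm_nonneg x) (by norm_num : (0:ℝ) ≤ 2)]
        congr 1
        rw [Real.rpow_two, Real.norm_eq_abs, sq_abs]
      rw [eLpNorm_eq_lintegral_rpow_enorm_toReal two_ne_zero ENNReal.ofNat_ne_top]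
      simp only [ENNReal.toReal_ofNat]
      rw [lintegral_congr fun ω => hpt (S n ω)]
    rw [heq]
    refine ENNReal.rpow_le_rpow ?_ (by norm_num)
    calc ∫⁻ ω, ENNReal.ofReal ((S n ω) ^ 2) ∂μ
        = ENNReal.ofReal (∫ ω, (S n ω) ^ 2 ∂μ) :=
          (ofReal_integral_eq_lintegral_ofReal (hS2 n).integrable_sq
            (Filter.Eventually.of_forall fun ω => sq_nonneg _)).symm
      _ = ENNReal.ofReal (∑ i ∈ Finset.range (n + 1), ∫ ω, (X i ω) ^ 2 ∂μ) := by rw [hI n]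
      _ = ∑ i ∈ Finset.range (n + 1), ENNReal.ofReal (∫ ω, (X i ω) ^ 2 ∂μ) :=
          ENNReal.ofReal_sum_of_nonneg fun i _ =>
            integral_nonneg fun ω => sq_nonneg _
      _ = ∑ i ∈ Finset.range (n + 1), ∫⁻ ω, ENNReal.ofReal ((X i ω) ^ 2) ∂μ :=
          Finset.sum_congr rfl fun i _ =>
            ofReal_integral_eq_lintegral_ofReal (hXsq i)
              (Filter.Eventually.of_forall fun ω => sq_nonneg _)
      _ ≤ T := ENNReal.sum_le_tsum _
  have hThalf : T ^ (1/2 : ℝ) ≠ ⊤ :=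
    (ENNReal.rpow_lt_top_of_nonneg (by norm_num) hTlt.ne).ne
  set R : ℝ≥0 := (T ^ (1/2 : ℝ)).toNNReal with hRdef
  have hbdd : ∀ n, eLpNorm (S n) 1 μ ≤ (R : ℝ≥0∞) := by
    intro n
    rw [hRdef, ENNReal.coe_toNNReal hThalf]
    exact le_trans
      (eLpNorm_le_eLpNorm_of_exponent_le (by norm_num) (hSint n).aestronglyMeasurable)
      (hS2bound n)
  have hconv := hmart.submartingale.exists_ae_tendsto_of_bdd hbdd
  filter_upwards [hconv] with ω hω
  obtain ⟨c, hc⟩ := hω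
  refine ⟨c, ?_⟩
  have : Tendsto (fun n => ∑ i ∈ Finset.range (n + 1), X i ω) atTop (𝓝 c) := hc
  exact (tendsto_add_atTop_iff_nat 1).mp this
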